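/- (Brezis–Lieb lemma.) Let $(X, \mu)$ be a measure space, $0 < p < \infty$, and let $(f_i)$ be a sequence of complex-valued measurable functions, uniformly bounded in $L^p(X,\mu)$, converging $\mu$-almost everywhere to $f$. Then $f \in L^p$ and $\lim_{i \to \infty}\left( \|f_i\|_p^p - \|f_i - f\|_p^p \right) = \|f\|_p^p$. -/

import Mathlib

open MeasureTheory Filter

private lemma BL_key (p : ℝ) (hp : 0 < p) {ε : ℝ} (hε : 0 < ε) :
    ∃ C : ℝ, 0 ≤ C ∧ ∀ s w : ℝ, 0 ≤ s → 0 ≤ w →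
      (s + w) ^ p ≤ (1 + ε) * s ^ p + C * w ^ p := by
  have hcont : ContinuousAt (fun d : ℝ => (1 + d) ^ p) 0 := by
    have h1 : ContinuousAt (fun y : ℝ => y ^ p) ((1:ℝ) + 0) :=
      Real.continuousAt_rpow_const _ _ (Or.inr hp.le)
    exact h1.comp (by fun_prop)
  have h1 : (fun d : ℝ => (1 + d) ^ p) 0 < 1 + ε := by
    simp only [add_zero, Real.one_rpow]; linarith
  have hev : ∀ᶠ d in nhds (0:ℝ), (1 + d) ^ p < 1 + ε :=
    (hcont.tendsto).eventually_lt_const h1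
  obtain ⟨δ, hδpos, hδ⟩ := Metric.eventually_nhds_iff.mp hev
  set d := δ / 2 with hd
  have hdpos : 0 < d := by positivity
  have hdlt : (1 + d) ^ p < 1 + ε := by
    refine hδ ?_
    rw [Real.dist_eq, sub_zero, abs_of_pos hdpos]
    rw [hd]
    linarith
  refine ⟨(1 + 1/d) ^ p, Real.rpow_nonneg (by positivity) _, fun s w hs hw => ?_⟩
  by_cases hcase : w ≤ d * s
  · have h2 : s + w ≤ (1 + d) * s := by nlinarith
    calc (s + w) ^ p ≤ ((1 + d) * s) ^ p :=
          Real.rpow_le_rpow (by linarith) h2 hp.le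
      _ = (1 + d) ^ p * s ^ p := Real.mul_rpow (by linarith) hs
      _ ≤ (1 + ε) * s ^ p :=
          mul_le_mul_of_nonneg_right hdlt.le (Real.rpow_nonneg hs _)
      _ ≤ _ := le_add_of_nonneg_right
          (mul_nonneg (Real.rpow_nonneg (by positivity) _) (Real.rpow_nonneg hw _))
  · push_neg at hcase
    have hsw : s ≤ (1/d) * w := by
      rw [one_div, inv_mul_eq_div, le_div_iff₀ hdpos]
      nlinarith
    have h2 : s + w ≤ (1 + 1/d) * w := by nlinarith
    calc (s + w) ^ p ≤ ((1 + 1/d) * w) ^ p :=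
          Real.rpow_le_rpow (by linarith) h2 hp.le
      _ = (1 + 1/d) ^ p * w ^ p := Real.mul_rpow (by positivity) hw
      _ ≤ _ := le_add_of_nonneg_left
          (mul_nonneg (by positivity) (Real.rpow_nonneg hs _))

private lemma BL_key2 (p : ℝ) (hp : 0 < p) {ε : ℝ} (hε : 0 < ε) :
    ∃ C : ℝ, 0 ≤ C ∧ ∀ a b : ℂ,
      |‖a + b‖ ^ p - ‖a‖ ^ p| ≤ ε * ‖a‖ ^ p + C * ‖b‖ ^ p := by
  obtain ⟨C, hC, hkey⟩ := BL_key p hp hε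
  refine ⟨C, hC, fun a b => ?_⟩
  rw [abs_sub_le_iff]
  constructor
  · have h0 := hkey ‖a‖ ‖b‖ (norm_nonneg _) (norm_nonneg _)
    have h1 : ‖a + b‖ ^ p ≤ (‖a‖ + ‖b‖) ^ p :=
      Real.rpow_le_rpow (norm_nonneg _) (norm_add_le _ _) hp.le
    nlinarith
  · set s := max (‖a‖ - ‖b‖) 0 with hsdef
    have hs0 : (0:ℝ) ≤ s := le_max_right _ _
    have hab : ‖a‖ ≤ ‖a + b‖ + ‖b‖ := by
      have := norm_add_le (a + b) (-b); simpa using this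
    have hsle : s ≤ ‖a + b‖ := max_le (by linarith) (norm_nonneg _)
    have hsa : s ≤ ‖a‖ := max_le (by linarith [norm_nonneg b]) (norm_nonneg a)
    have haw : ‖a‖ ≤ s + ‖b‖ := by
      have : ‖a‖ - ‖b‖ ≤ s := le_max_left _ _
      linarith
    have h1 : ‖a‖ ^ p ≤ (s + ‖b‖) ^ p :=
      Real.rpow_le_rpow (norm_nonneg _) haw hp.le
    have h2 := hkey s ‖b‖ hs0 (norm_nonneg _)
    have h3 : s ^ p ≤ ‖a + b‖ ^ p := Real.rpow_le_rpow hs0 hsle hp.le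
    have h4 : s ^ p ≤ ‖a‖ ^ p := Real.rpow_le_rpow hs0 hsa hp.le
    nlinarith [mul_le_mul_of_nonneg_left h4 hε.le]

theorem stmt_11 {X : Type*} [MeasurableSpace X] (μ : Measure X)
    (p : ℝ) (hp : 0 < p) (f : ℕ → X → ℂ) (g : X → ℂ)
    (hmeas : ∀ i, AEStronglyMeasurable (f i) μ)
    (hbdd : ∃ C : ℝ, ∀ i, ∫⁻ x, ENNReal.ofReal (‖f i x‖ ^ p) ∂μ ≤ ENNReal.ofReal C)
    (hae : ∀ᵐ x ∂μ, Tendsto (fun i => f i x) atTop (nhds (g x))) :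
    (∫⁻ x, ENNReal.ofReal (‖g x‖ ^ p) ∂μ) < ⊤ ∧
    Tendsto (fun i => (∫ x, ‖f i x‖ ^ p ∂μ) - ∫ x, ‖f i x - g x‖ ^ p ∂μ)
      atTop (nhds (∫ x, ‖g x‖ ^ p ∂μ)) := by
  obtain ⟨C0, hC0⟩ := hbdd
  have hgm : AEStronglyMeasurable g μ := aestronglyMeasurable_of_tendsto_ae atTop hmeas hae
  have hcont : Continuous (fun t : ℝ => t ^ p) := Real.continuous_rpow_const hp.le
  have hφm : ∀ (u : X → ℂ), AEStronglyMeasurable u μ →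
      AEStronglyMeasurable (fun x => ‖u x‖ ^ p) μ :=
    fun u hu => hcont.comp_aestronglyMeasurable hu.norm
  have hφnn : ∀ (u : X → ℂ) (x : X), 0 ≤ ‖u x‖ ^ p :=
    fun u x => Real.rpow_nonneg (norm_nonneg _) _
  -- pointwise a.e. convergences
  have haen : ∀ᵐ x ∂μ, Tendsto (fun i => ‖f i x‖ ^ p) atTop (nhds (‖g x‖ ^ p))
      ∧ Tendsto (fun i => ‖f i x - g x‖ ^ p) atTop (nhds 0) := by
    filter_upwards [hae] with x hx
    refine ⟨(hcont.tendsto _).comp hx.norm, ?_⟩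
    have h0 : Tendsto (fun i => ‖f i x - g x‖) atTop (nhds 0) := by
      have := (hx.sub (tendsto_const_nhds (x := g x))).norm
      rwa [sub_self, norm_zero] at this
    have := (hcont.tendsto 0).comp h0
    simpa [Function.comp_def, Real.zero_rpow hp.ne'] using this
  -- Part 1 : finiteness via Fatou
  have hglim : ∫⁻ x, ENNReal.ofReal (‖g x‖ ^ p) ∂μ ≤ ENNReal.ofReal C0 := by
    have hmA : ∀ i, AEMeasurable (fun x => ENNReal.ofReal (‖f i x‖ ^ p)) μ :=
      fun i => ((hφm _ (hmeas i)).aemeasurable).ennreal_ofReal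
    calc ∫⁻ x, ENNReal.ofReal (‖g x‖ ^ p) ∂μ
        = ∫⁻ x, liminf (fun i => ENNReal.ofReal (‖f i x‖ ^ p)) atTop ∂μ := by
          refine lintegral_congr_ae ?_
          filter_upwards [haen] with x hx
          exact ((ENNReal.continuous_ofReal.tendsto _).comp hx.1).liminf_eq.symm
      _ ≤ liminf (fun i => ∫⁻ x, ENNReal.ofReal (‖f i x‖ ^ p) ∂μ) atTop :=
          lintegral_liminf_le' hmA
      _ ≤ liminf (fun _ : ℕ => ENNReal.ofReal C0) atTop :=
          liminf_le_liminf (Eventually.of_forall hC0)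
      _ = ENNReal.ofReal C0 := liminf_const _
  have hfin : (∫⁻ x, ENNReal.ofReal (‖g x‖ ^ p) ∂μ) < ⊤ :=
    hglim.trans_lt ENNReal.ofReal_lt_top
  refine ⟨hfin, ?_⟩
  -- integrability
  have hint : ∀ (u : X → ℂ), AEStronglyMeasurable u μ →
      (∫⁻ x, ENNReal.ofReal (‖u x‖ ^ p) ∂μ) < ⊤ → Integrable (fun x => ‖u x‖ ^ p) μ := by
    intro u hu hfi
    refine ⟨hφm u hu, ?_⟩
    rw [hasFiniteIntegral_iff_ofReal (Eventually.of_forall (hφnn u))]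
    exact hfi
  have hgint : Integrable (fun x => ‖g x‖ ^ p) μ := hint g hgm hfin
  have hfint : ∀ i, Integrable (fun x => ‖f i x‖ ^ p) μ :=
    fun i => hint (f i) (hmeas i) ((hC0 i).trans_lt ENNReal.ofReal_lt_top)
  obtain ⟨C1, hC1nn, hC1⟩ := BL_key p hp one_pos
  have hdptw : ∀ i x, ‖f i x - g x‖ ^ p ≤ 2 * ‖f i x‖ ^ p + C1 * ‖g x‖ ^ p := by
    intro i x
    calc ‖f i x - g x‖ ^ p ≤ (‖f i x‖ + ‖g x‖) ^ p :=
          Real.rpow_le_rpow (norm_nonneg _) (norm_sub_le _ _) hp.le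
      _ ≤ (1 + 1) * ‖f i x‖ ^ p + C1 * ‖g x‖ ^ p :=
          hC1 _ _ (norm_nonneg _) (norm_nonneg _)
      _ = 2 * ‖f i x‖ ^ p + C1 * ‖g x‖ ^ p := by norm_num
  have hdmaj : ∀ i, Integrable (fun x => 2 * ‖f i x‖ ^ p + C1 * ‖g x‖ ^ p) μ :=
    fun i => ((hfint i).const_mul 2).add (hgint.const_mul C1)
  have hdint : ∀ i, Integrable (fun x => ‖f i x - g x‖ ^ p) μ := by
    intro i
    refine Integrable.mono' (hdmaj i) (hφm _ ((hmeas i).sub hgm)) ?_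
    filter_upwards with x
    rw [Real.norm_of_nonneg (Real.rpow_nonneg (norm_nonneg _) _)]
    exact hdptw i x
  -- uniform bounds on integrals
  set M : ℝ := max C0 0 with hM
  set IG : ℝ := ∫ x, ‖g x‖ ^ p ∂μ with hIG
  have hIGnn : 0 ≤ IG := integral_nonneg (hφnn g)
  have hBi : ∀ i, ∫ x, ‖f i x‖ ^ p ∂μ ≤ M := by
    intro i
    rw [integral_eq_lintegral_of_nonneg_ae (Eventually.of_forall (hφnn _)) (hφm _ (hmeas i))]
    refine ENNReal.toReal_le_of_le_ofReal (le_max_right _ _) ?_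
    exact (hC0 i).trans (ENNReal.ofReal_le_ofReal (le_max_left _ _))
  have hBinn : ∀ i, 0 ≤ ∫ x, ‖f i x‖ ^ p ∂μ := fun i => integral_nonneg (hφnn _)
  set M' : ℝ := 2 * M + C1 * IG with hM'
  have hM'nn : 0 ≤ M' := by
    have : (0:ℝ) ≤ M := le_max_right _ _
    positivity
  have hDi : ∀ i, ∫ x, ‖f i x - g x‖ ^ p ∂μ ≤ M' := by
    intro i
    calc ∫ x, ‖f i x - g x‖ ^ p ∂μ ≤ ∫ x, (2 * ‖f i x‖ ^ p + C1 * ‖g x‖ ^ p) ∂μ :=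
          integral_mono (hdint i) (hdmaj i) (fun x => hdptw i x)
      _ = 2 * (∫ x, ‖f i x‖ ^ p ∂μ) + C1 * IG := by
          rw [integral_add ((hfint i).const_mul 2) (hgint.const_mul C1),
            integral_const_mul, integral_const_mul]
      _ ≤ M' := by
          have := hBi i
          nlinarith
  have hDinn : ∀ i, 0 ≤ ∫ x, ‖f i x - g x‖ ^ p ∂μ := fun i => integral_nonneg (hφnn _)
  -- define h
  set h : ℕ → X → ℝ := fun i x => ‖f i x‖ ^ p - ‖f i x - g x‖ ^ p - ‖g x‖ ^ p with hh
  have hhint : ∀ i, Integrable (h i) μ := fun i => ((hfint i).sub (hdint i)).sub hgint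
  have hhI : ∀ i, ∫ x, h i x ∂μ
      = (∫ x, ‖f i x‖ ^ p ∂μ) - (∫ x, ‖f i x - g x‖ ^ p ∂μ) - IG := by
    intro i
    have hFG : Integrable (fun x => ‖f i x‖ ^ p - ‖f i x - g x‖ ^ p) μ :=
      (hfint i).sub (hdint i)
    rw [hh]
    rw [integral_sub hFG hgint, integral_sub (hfint i) (hdint i)]
  -- main claim : ∫ h i → 0
  have hmain : Tendsto (fun i => ∫ x, h i x ∂μ) atTop (nhds 0) := by
    rw [Metric.tendsto_atTop]
    intro ε0 hε0
    set ε : ℝ := ε0 / (2 * (M' + 1)) with hε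
    have hεpos : 0 < ε := by positivity
    obtain ⟨C, hCnn, hC⟩ := BL_key2 p hp hεpos
    set W : ℕ → X → ℝ := fun i x => max (|h i x| - ε * ‖f i x - g x‖ ^ p) 0 with hW
    have hWnn : ∀ i x, 0 ≤ W i x := fun i x => le_max_right _ _
    have hhabs : ∀ i x, |h i x| ≤ ε * ‖f i x - g x‖ ^ p + (C + 1) * ‖g x‖ ^ p := by
      intro i x
      have hkey := hC (f i x - g x) (g x)
      rw [sub_add_cancel] at hkey
      have h5 : |h i x| ≤ |‖f i x‖ ^ p - ‖f i x - g x‖ ^ p| + ‖g x‖ ^ p := by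
        rw [hh]
        have := abs_sub (‖f i x‖ ^ p - ‖f i x - g x‖ ^ p) (‖g x‖ ^ p)
        calc |‖f i x‖ ^ p - ‖f i x - g x‖ ^ p - ‖g x‖ ^ p|
            ≤ |‖f i x‖ ^ p - ‖f i x - g x‖ ^ p| + |‖g x‖ ^ p| := abs_sub _ _
          _ = _ := by rw [abs_of_nonneg (hφnn g x)]
      nlinarith
    have hWbound : ∀ i x, W i x ≤ (C + 1) * ‖g x‖ ^ p := by
      intro i x
      refine max_le ?_ (by positivity)
      have := hhabs i x
      linarith
    have hWm : ∀ i, AEStronglyMeasurable (W i) μ := by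
      intro i
      have h1 : AEStronglyMeasurable (h i) μ :=
        ((hφm _ (hmeas i)).sub (hφm _ ((hmeas i).sub hgm))).sub (hφm _ hgm)
      have h2 : AEStronglyMeasurable (fun x => |h i x|) μ :=
        continuous_abs.comp_aestronglyMeasurable h1
      have h3 : AEStronglyMeasurable
          (fun x => |h i x| - ε * ‖f i x - g x‖ ^ p) μ :=
        h2.sub ((hφm _ ((hmeas i).sub hgm)).const_mul ε)
      exact (continuous_id.max continuous_const).comp_aestronglyMeasurable h3
    have hWint : ∀ i, Integrable (W i) μ := by
      intro i
      refine Integrable.mono' (hgint.const_mul (C + 1)) (hWm i) ?_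
      filter_upwards with x
      rw [Real.norm_of_nonneg (hWnn i x)]
      exact hWbound i x
    have hWtend : Tendsto (fun i => ∫ x, W i x ∂μ) atTop (nhds 0) := by
      have := tendsto_integral_of_dominated_convergence
        (fun x => (C + 1) * ‖g x‖ ^ p) hWm (hgint.const_mul (C + 1))
        (fun i => Eventually.of_forall fun x => by
          rw [Real.norm_of_nonneg (hWnn i x)]; exact hWbound i x)
        (by
          filter_upwards [haen] with x hx
          have hzero : Tendsto (fun i => h i x) atTop (nhds 0) := by
            have := (hx.1.sub hx.2).sub (tendsto_const_nhds (x := ‖g x‖ ^ p))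
            simpa [hh] using this
          have h9 : Tendsto (fun i => |h i x| - ε * ‖f i x - g x‖ ^ p) atTop (nhds 0) := by
            have := hzero.abs.sub (hx.2.const_mul ε)
            simpa using this
          have := h9.max (tendsto_const_nhds (x := (0:ℝ)))
          simpa [hW] using this)
      simpa using this
    rw [Metric.tendsto_atTop] at hWtend
    obtain ⟨N, hN⟩ := hWtend (ε0 / 2) (by positivity)
    refine ⟨N, fun i hi => ?_⟩
    have hWi := hN i hi
    rw [Real.dist_eq, sub_zero] at hWi ⊢
    have hWnn' : 0 ≤ ∫ x, W i x ∂μ := integral_nonneg (hWnn i)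
    rw [abs_of_nonneg hWnn'] at hWi
    have hptw : ∀ x, |h i x| ≤ W i x + ε * ‖f i x - g x‖ ^ p := by
      intro x
      have : |h i x| - ε * ‖f i x - g x‖ ^ p ≤ W i x := le_max_left _ _
      linarith
    have habsint : ∫ x, |h i x| ∂μ ≤ (∫ x, W i x ∂μ) + ε * ∫ x, ‖f i x - g x‖ ^ p ∂μ := by
      calc ∫ x, |h i x| ∂μ ≤ ∫ x, (W i x + ε * ‖f i x - g x‖ ^ p) ∂μ :=
            integral_mono (hhint i).abs ((hWint i).add ((hdint i).const_mul ε)) hptw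
        _ = _ := by rw [integral_add (hWint i) ((hdint i).const_mul ε), integral_const_mul]
    have h6 : |∫ x, h i x ∂μ| ≤ ∫ x, |h i x| ∂μ := by
      simpa [Real.norm_eq_abs] using norm_integral_le_integral_norm (h i)
    have h7 : ε * ∫ x, ‖f i x - g x‖ ^ p ∂μ ≤ ε * M' :=
      mul_le_mul_of_nonneg_left (hDi i) hεpos.le
    have h8 : ε * M' < ε0 / 2 := by
      rw [hε]
      rw [div_mul_eq_mul_div, div_lt_iff₀ (by positivity)]
      nlinarith
    calc |∫ x, h i x ∂μ| ≤ ∫ x, |h i x| ∂μ := h6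
      _ ≤ (∫ x, W i x ∂μ) + ε * ∫ x, ‖f i x - g x‖ ^ p ∂μ := habsint
      _ ≤ (∫ x, W i x ∂μ) + ε * M' := by linarith
      _ < ε0 / 2 + ε0 / 2 := by exact add_lt_add hWi h8
      _ = ε0 := by ring
  -- conclude
  have := hmain.add (tendsto_const_nhds (x := IG))
  rw [zero_add] at this
  refine Tendsto.congr ?_ this
  intro i
  rw [hhI i]
  ring
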